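/- Let G be a group, let g ≥ 3, and let a_1,…,a_{g−1}, y be elements of G satisfying: a_i a_j = a_j a_i for |i−j|>1; a_i a_{i+1} a_i = a_{i+1} a_i a_{i+1} for i=1,…,g−2; a_i y = y a_i for i=3,…,g−1; and a_1 y = y a_1^{−1}. Set M = a_1⋯a_{g−1}, u_1 = a_1 y, and u_i = M^{i−1} u_1^{(−1)^{i−1}} M^{−(i−1)} for i = 2,…,g−1. Then for each i = 1,…,g−2, the relation (C2) a_i u_{i+1} u_i = u_{i+1} u_i a_{i+1} holds if and only if relation (C2') holds: a_2 (y a_2 y^{−1}) = (y a_2 y^{−1}) a_2. -/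

import Mathlib

section Stmt13Aux

variable {G : Type*} [Group G]

private lemma range'_split13 (s m n : ℕ) :
    List.range' s (m + n) = List.range' s m ++ List.range' (s + m) n := by
  have := List.range'_append (s := s) (m := m) (n := n) (step := 1)
  simp only [Nat.one_mul] at this
  rw [← this]

private lemma conj_cancel_iff13 (m x z : G) : m * x * m⁻¹ = m * z * m⁻¹ ↔ x = z := by
  constructor
  · intro h; exact mul_left_cancel (mul_right_cancel h)
  · intro h; rw [h]

private lemma comm_conj_iff13 (m x z : G) :
    (m*x*m⁻¹) * (m*z*m⁻¹) = (m*z*m⁻¹) * (m*x*m⁻¹) ↔ x * z = z * x := by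
  constructor
  · intro h
    have h2 : m * (x*z) * m⁻¹ = m * (z*x) * m⁻¹ := by
      calc m * (x*z) * m⁻¹ = (m*x*m⁻¹) * (m*z*m⁻¹) := by group
        _ = (m*z*m⁻¹) * (m*x*m⁻¹) := h
        _ = m * (z*x) * m⁻¹ := by group
    exact (conj_cancel_iff13 m _ _).mp h2
  · intro h
    calc (m*x*m⁻¹) * (m*z*m⁻¹) = m * (x*z) * m⁻¹ := by group
      _ = m * (z*x) * m⁻¹ := by rw [h]
      _ = (m*z*m⁻¹) * (m*x*m⁻¹) := by group

private lemma comm_inv_iff13 (x z : G) : x * z⁻¹ = z⁻¹ * x ↔ x * z = z * x := by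
  constructor
  · intro h
    calc x*z = z*(z⁻¹*x)*z := by group
      _ = z*(x*z⁻¹)*z := by rw [h]
      _ = z*x := by group
  · intro h
    calc x*z⁻¹ = z⁻¹*(z*x)*z⁻¹ := by group
      _ = z⁻¹*(x*z)*z⁻¹ := by rw [h]
      _ = z⁻¹*x := by group

private lemma commAux13 (c y : G) :
    (c*(y⁻¹*c⁻¹*y) = (y⁻¹*c⁻¹*y)*c) ↔ (c * (y*c*y⁻¹) = (y*c*y⁻¹) * c) := by
  rw [show y⁻¹*c⁻¹*y = (y⁻¹*c*y)⁻¹ from by group, comm_inv_iff13]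
  rw [← comm_conj_iff13 y c (y⁻¹*c*y)]
  rw [show y*(y⁻¹*c*y)*y⁻¹ = c from by group]
  exact eq_comm

private lemma coreA13 (b c y : G) (hb : b*c*b = c*b*c) (hy : b*y = y*b⁻¹) :
    (b * (b*c*y⁻¹*c⁻¹*b⁻¹*c⁻¹) * (b*y) = (b*c*y⁻¹*c⁻¹*b⁻¹*c⁻¹) * (b*y) * c) ↔
    (c * (y*c*y⁻¹) = (y*c*y⁻¹) * c) := by
  have hb' : c⁻¹*b⁻¹*c⁻¹ = b⁻¹*c⁻¹*b⁻¹ := by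
    have := congrArg (·⁻¹) hb
    simpa [mul_assoc] using this.symm
  have h2 : y⁻¹*b⁻¹ = b*y⁻¹ := by
    have := congrArg (·⁻¹) hy
    simpa [mul_assoc] using this
  have hX : (b*c*y⁻¹*c⁻¹*b⁻¹*c⁻¹) * (b*y) = b*c*b*(y⁻¹*c⁻¹*y) := by
    calc (b*c*y⁻¹*c⁻¹*b⁻¹*c⁻¹) * (b*y) = b*c*y⁻¹*(c⁻¹*b⁻¹*c⁻¹)*(b*y) := by group
      _ = b*c*y⁻¹*(b⁻¹*c⁻¹*b⁻¹)*(b*y) := by rw [hb']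
      _ = b*c*(y⁻¹*b⁻¹)*(c⁻¹*y) := by group
      _ = b*c*(b*y⁻¹)*(c⁻¹*y) := by rw [h2]
      _ = b*c*b*(y⁻¹*c⁻¹*y) := by group
  rw [mul_assoc b, hX]
  rw [show b*(b*c*b*(y⁻¹*c⁻¹*y)) = b*((b*c*b)*(y⁻¹*c⁻¹*y)) from by group,
      show (b*c*b*(y⁻¹*c⁻¹*y))*c = b*((c*b)*((y⁻¹*c⁻¹*y)*c)) from by group,
      mul_right_inj, hb,
      show (c*b*c)*(y⁻¹*c⁻¹*y) = (c*b)*(c*(y⁻¹*c⁻¹*y)) from by group,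
      mul_right_inj]
  exact commAux13 c y

private lemma coreB13 (b c y : G) (hb : b*c*b = c*b*c) (hy : b*y = y*b⁻¹) :
    (b * (c*b*c*y*c⁻¹*b⁻¹) * (b*y)⁻¹ = (c*b*c*y*c⁻¹*b⁻¹) * (b*y)⁻¹ * c) ↔
    (c * (y*c*y⁻¹) = (y*c*y⁻¹) * c) := by
  have h2 : y⁻¹*b⁻¹ = b*y⁻¹ := by
    have := congrArg (·⁻¹) hy
    simpa [mul_assoc] using this
  have h3 : b⁻¹*y⁻¹ = y⁻¹*b := by
    calc b⁻¹*y⁻¹ = b⁻¹*(y⁻¹*b⁻¹)*b := by group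
      _ = b⁻¹*(b*y⁻¹)*b := by rw [h2]
      _ = y⁻¹*b := by group
  have hZ : (c*b*c*y*c⁻¹*b⁻¹) * (b*y)⁻¹ = c*b*c*(y*c⁻¹*y⁻¹) := by
    calc (c*b*c*y*c⁻¹*b⁻¹) * (b*y)⁻¹ = c*b*c*y*c⁻¹*(b⁻¹*y⁻¹)*b⁻¹ := by group
      _ = c*b*c*y*c⁻¹*(y⁻¹*b)*b⁻¹ := by rw [h3]
      _ = c*b*c*(y*c⁻¹*y⁻¹) := by group
  rw [mul_assoc b, hZ]
  rw [show b*(c*b*c*(y*c⁻¹*y⁻¹)) = (b*c*b)*(c*(y*c⁻¹*y⁻¹)) from by group,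
      hb,
      show (c*b*c*(y*c⁻¹*y⁻¹))*c = (c*b*c)*((y*c⁻¹*y⁻¹)*c) from by group,
      show (c*b*c)*(c*(y*c⁻¹*y⁻¹)) = (c*b*c)*(c*(y*c⁻¹*y⁻¹)) from rfl,
      mul_right_inj]
  rw [show y*c⁻¹*y⁻¹ = (y*c*y⁻¹)⁻¹ from by group, comm_inv_iff13]

end Stmt13Aux

/-- after the substitutions `u₁ = a₁ y` and
`uᵢ = M^(i-1) u₁^((-1)^(i-1)) M^(-(i-1))`, each relation of the family (C2)
is equivalent to relation (C2'). -/
theorem stmt_13 {G : Type*} [Group G] (g : ℕ) (hg : 3 ≤ g) (a : ℕ → G) (y : G)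
    (hA1 : ∀ i j, 1 ≤ i → j ≤ g - 1 → i + 1 < j → a i * a j = a j * a i)
    (hA2 : ∀ i, 1 ≤ i → i ≤ g - 2 → a i * a (i + 1) * a i = a (i + 1) * a i * a (i + 1))
    (hC1' : ∀ i, 3 ≤ i → i ≤ g - 1 → a i * y = y * a i)
    (hC4' : a 1 * y = y * (a 1)⁻¹)
    (M u1 : G) (u : ℕ → G)
    (hM : M = ((List.range' 1 (g - 1)).map a).prod)
    (hu1 : u1 = a 1 * y)
    (hu : ∀ i, 1 ≤ i → i ≤ g - 1 → u i = M ^ (i - 1) * u1 ^ ((-1 : ℤ) ^ (i - 1)) * (M ^ (i - 1))⁻¹) :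
    ∀ i, 1 ≤ i → i ≤ g - 2 →
      (a i * u (i + 1) * u i = u (i + 1) * u i * a (i + 1) ↔
        a 2 * (y * a 2 * y⁻¹) = (y * a 2 * y⁻¹) * a 2) := by
  -- the shift lemma: conjugation by M shifts the generators
  have hshift : ∀ j, 1 ≤ j → j + 1 ≤ g - 1 → M * a j = a (j + 1) * M := by
    intro j hj1 hj2
    set t := g - 1 - (j + 1) with ht
    have hlist : List.range' 1 (g - 1) =
        List.range' 1 (j - 1) ++ (j :: (j + 1) :: List.range' (j + 1 + 1) t) := by
      have h1 : g - 1 = (j - 1) + (t + 1 + 1) := by omega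
      rw [h1, range'_split13]
      have h2 : 1 + (j - 1) = j := by omega
      rw [h2, List.range'_succ, List.range'_succ]
    set P := ((List.range' 1 (j - 1)).map a).prod with hP
    set S := ((List.range' (j + 1 + 1) t).map a).prod with hS
    have hMdec : M = P * (a j * (a (j + 1) * S)) := by
      rw [hM, hlist]
      simp [List.prod_append, List.prod_cons, mul_assoc]
      rfl
    have hcS : Commute (a j) S := by
      apply Commute.list_prod_right
      intro x hx
      simp only [List.mem_map] at hx
      obtain ⟨kk, hk, rfl⟩ := hx
      rw [List.mem_range'_1] at hk
      exact hA1 j kk hj1 (by omega) (by omega)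
    have hcP : Commute (a (j + 1)) P := by
      apply Commute.list_prod_right
      intro x hx
      simp only [List.mem_map] at hx
      obtain ⟨kk, hk, rfl⟩ := hx
      rw [List.mem_range'_1] at hk
      exact (hA1 kk (j + 1) (by omega) (by omega) (by omega)).symm
    calc M * a j = P * ((a j * a (j + 1)) * (S * a j)) := by rw [hMdec]; group
      _ = P * ((a j * a (j + 1)) * (a j * S)) := by rw [← hcS.eq]
      _ = P * ((a j * a (j + 1) * a j) * S) := by group
      _ = P * ((a (j + 1) * a j * a (j + 1)) * S) := by rw [hA2 j hj1 (by omega)]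
      _ = (P * a (j + 1)) * (a j * (a (j + 1) * S)) := by group
      _ = (a (j + 1) * P) * (a j * (a (j + 1) * S)) := by rw [← hcP.eq]
      _ = a (j + 1) * M := by rw [hMdec]; group
  -- conjugation of y by M
  have hMy : M * y = (a 1 * a 2 * y * (a 2)⁻¹ * (a 1)⁻¹) * M := by
    set T := ((List.range' (1 + 1 + 1) (g - 3)).map a).prod with hT
    have hMdec : M = a 1 * (a (1 + 1) * T) := by
      rw [hM, show g - 1 = (g - 3) + 1 + 1 from by omega, List.range'_succ, List.range'_succ]
      simp [List.prod_cons, mul_assoc]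
      rfl
    have hcT : Commute y T := by
      apply Commute.list_prod_right
      intro x hx
      simp only [List.mem_map] at hx
      obtain ⟨kk, hk, rfl⟩ := hx
      rw [List.mem_range'_1] at hk
      exact (hC1' kk (by omega) (by omega)).symm
    have h12 : a (1 + 1) = a 2 := by norm_num
    calc M * y = a 1 * (a (1 + 1) * (T * y)) := by rw [hMdec]; group
      _ = a 1 * (a (1 + 1) * (y * T)) := by rw [← hcT.eq]
      _ = (a 1 * a (1 + 1) * y * (a (1 + 1))⁻¹ * (a 1)⁻¹) * (a 1 * (a (1 + 1) * T)) := by group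
      _ = (a 1 * a 2 * y * (a 2)⁻¹ * (a 1)⁻¹) * M := by rw [h12, ← hMdec]
  -- iterated shift
  have hMpow : ∀ k j, 1 ≤ j → j + k ≤ g - 1 → M ^ k * a j = a (j + k) * M ^ k := by
    intro k
    induction k with
    | zero => intro j _ _; simp
    | succ n ih =>
      intro j hj1 hjk
      calc M ^ (n + 1) * a j = M ^ n * (M * a j) := by rw [pow_succ]; group
        _ = M ^ n * (a (j + 1) * M) := by rw [hshift j hj1 (by omega)]
        _ = (M ^ n * a (j + 1)) * M := by group
        _ = (a (j + 1 + n) * M ^ n) * M := by rw [ih (j + 1) (by omega) (by omega)]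
        _ = a (j + (n + 1)) * M ^ (n + 1) := by rw [show j + 1 + n = j + (n + 1) from by omega, pow_succ]; group
  have hMa1 : M * a 1 = a 2 * M := by
    have := hshift 1 le_rfl (by omega)
    norm_num at this
    exact this
  -- auxiliary conjugation facts
  have hMyi : M * y⁻¹ = (a 1 * a 2 * y⁻¹ * (a 2)⁻¹ * (a 1)⁻¹) * M := by
    calc M * y⁻¹ = (M * y * M⁻¹)⁻¹ * M := by group
      _ = ((a 1 * a 2 * y * (a 2)⁻¹ * (a 1)⁻¹) * M * M⁻¹)⁻¹ * M := by rw [hMy]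
      _ = (a 1 * a 2 * y⁻¹ * (a 2)⁻¹ * (a 1)⁻¹) * M := by group
  have hMa1i : M * (a 1)⁻¹ = (a 2)⁻¹ * M := by
    calc M * (a 1)⁻¹ = (M * a 1 * M⁻¹)⁻¹ * M := by group
      _ = (a 2 * M * M⁻¹)⁻¹ * M := by rw [hMa1]
      _ = (a 2)⁻¹ * M := by group
  have hW1 : M * (a 1 * y)⁻¹ * M⁻¹ = a 1 * a 2 * y⁻¹ * (a 2)⁻¹ * (a 1)⁻¹ * (a 2)⁻¹ := by
    calc M * (a 1 * y)⁻¹ * M⁻¹ = (M * y⁻¹) * ((a 1)⁻¹ * M⁻¹) := by group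
      _ = ((a 1 * a 2 * y⁻¹ * (a 2)⁻¹ * (a 1)⁻¹) * M) * ((a 1)⁻¹ * M⁻¹) := by rw [hMyi]
      _ = (a 1 * a 2 * y⁻¹ * (a 2)⁻¹ * (a 1)⁻¹) * ((M * (a 1)⁻¹) * M⁻¹) := by group
      _ = (a 1 * a 2 * y⁻¹ * (a 2)⁻¹ * (a 1)⁻¹) * (((a 2)⁻¹ * M) * M⁻¹) := by rw [hMa1i]
      _ = a 1 * a 2 * y⁻¹ * (a 2)⁻¹ * (a 1)⁻¹ * (a 2)⁻¹ := by group
  have hW2 : M * (a 1 * y) * M⁻¹ = a 2 * a 1 * a 2 * y * (a 2)⁻¹ * (a 1)⁻¹ := by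
    calc M * (a 1 * y) * M⁻¹ = (M * a 1) * (y * M⁻¹) := by group
      _ = (a 2 * M) * (y * M⁻¹) := by rw [hMa1]
      _ = a 2 * ((M * y) * M⁻¹) := by group
      _ = a 2 * (((a 1 * a 2 * y * (a 2)⁻¹ * (a 1)⁻¹) * M) * M⁻¹) := by rw [hMy]
      _ = a 2 * a 1 * a 2 * y * (a 2)⁻¹ * (a 1)⁻¹ := by group
  have hb : a 1 * a 2 * a 1 = a 2 * a 1 * a 2 := by
    have := hA2 1 le_rfl (by omega)
    norm_num at this
    exact this
  -- main argument
  intro i hi1 hi2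
  obtain ⟨k, rfl⟩ : ∃ k, i = k + 1 := ⟨i - 1, by omega⟩
  have hu_i : u (k + 1) = M ^ k * u1 ^ ((-1 : ℤ) ^ k) * (M ^ k)⁻¹ := by
    have := hu (k + 1) (by omega) (by omega)
    simpa using this
  have hu_i1 : u (k + 1 + 1) = M ^ (k + 1) * u1 ^ ((-1 : ℤ) ^ (k + 1)) * (M ^ (k + 1))⁻¹ := by
    have := hu (k + 1 + 1) (by omega) (by omega)
    simpa using this
  have ha1 : a (k + 1) = M ^ k * a 1 * (M ^ k)⁻¹ := by
    have h := hMpow k 1 le_rfl (by omega)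
    rw [show 1 + k = k + 1 from by omega] at h
    calc a (k + 1) = (a (k + 1) * M ^ k) * (M ^ k)⁻¹ := by group
      _ = (M ^ k * a 1) * (M ^ k)⁻¹ := by rw [← h]
      _ = M ^ k * a 1 * (M ^ k)⁻¹ := by group
  have ha2 : a (k + 1 + 1) = M ^ k * a 2 * (M ^ k)⁻¹ := by
    have h := hMpow k 2 (by omega) (by omega)
    rw [show 2 + k = k + 1 + 1 from by omega] at h
    calc a (k + 1 + 1) = (a (k + 1 + 1) * M ^ k) * (M ^ k)⁻¹ := by group
      _ = (M ^ k * a 2) * (M ^ k)⁻¹ := by rw [← h]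
      _ = M ^ k * a 2 * (M ^ k)⁻¹ := by group
  rcases Nat.even_or_odd k with hk | hk
  · -- even case : u_(k+1) = M^k u1 M^-k , u_(k+2) = M^(k+1) u1⁻¹ M^-(k+1)
    rw [hk.neg_one_pow, zpow_one] at hu_i
    rw [(hk.add_one).neg_one_pow, zpow_neg_one] at hu_i1
    have eL : a (k + 1) * u (k + 1 + 1) * u (k + 1) =
        M ^ k * (a 1 * (M * u1⁻¹ * M⁻¹) * u1) * (M ^ k)⁻¹ := by
      rw [hu_i, hu_i1, ha1]; group
    have eR : u (k + 1 + 1) * u (k + 1) * a (k + 1 + 1) =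
        M ^ k * ((M * u1⁻¹ * M⁻¹) * u1 * a 2) * (M ^ k)⁻¹ := by
      rw [hu_i, hu_i1, ha2]; group
    rw [eL, eR, conj_cancel_iff13, hu1, mul_inv_rev, show y⁻¹ * (a 1)⁻¹ = (a 1 * y)⁻¹ from by group,
        hW1]
    exact coreA13 (a 1) (a 2) y hb hC4'
  · -- odd case
    rw [hk.neg_one_pow, zpow_neg_one] at hu_i
    rw [(Odd.add_one hk).neg_one_pow, zpow_one] at hu_i1
    have eL : a (k + 1) * u (k + 1 + 1) * u (k + 1) =
        M ^ k * (a 1 * (M * u1 * M⁻¹) * u1⁻¹) * (M ^ k)⁻¹ := by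
      rw [hu_i, hu_i1, ha1]; group
    have eR : u (k + 1 + 1) * u (k + 1) * a (k + 1 + 1) =
        M ^ k * ((M * u1 * M⁻¹) * u1⁻¹ * a 2) * (M ^ k)⁻¹ := by
      rw [hu_i, hu_i1, ha2]; group
    rw [eL, eR, conj_cancel_iff13, hu1, hW2]
    exact coreB13 (a 1) (a 2) y hb hC4'
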